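/- Let D ∈ GLₙ(ℤ) and d ∈ ℤⁿ. Then there exist a non-negative integer l and non-negative integers c₁, …, c_l such that for every complex z with |z| < 1, the series ∑_{k=1}^{∞} O(Iₙ − Dᵏ, [∑_{i=0}^{k−1} Dⁱ] d) · zᵏ/k converges and exp of its sum equals ∏_{i=1}^{l} (1 − zⁱ)^{−cᵢ}; in particular this function is rational. -/

import Mathlib

open Matrix
open Function MulAction

/-- minimal period of a permutation equals the cardinality of the orbit under `zpowers`. -/
lemma minper_eq_card_orbit {X : Type*} [Fintype X] (σ : Equiv.Perm X) (x : X) :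
    Function.minimalPeriod σ x = Nat.card (MulAction.orbit (Subgroup.zpowers σ) x) := by
  classical
  letI : Fintype (MulAction.orbit (Subgroup.zpowers σ) x) := Fintype.ofFinite _
  have h := MulAction.minimalPeriod_eq_card (a := σ) (b := x)
  have hsm : (fun y => σ • y) = ⇑σ := rfl
  rw [hsm] at h
  rw [h, Nat.card_eq_fintype_card]

/-- the number of points of minimal period `p` is divisible by `p`. -/
lemma card_period_dvd {X : Type*} [Fintype X] (σ : Equiv.Perm X) (p : ℕ) :
    p ∣ Nat.card {x : X // Function.minimalPeriod σ x = p} := by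
  classical
  rw [Nat.card_eq_fintype_card, Fintype.card_subtype]
  rw [Finset.card_eq_sum_card_fiberwise
    (f := fun x : X => (Quotient.mk'' x : Quotient (MulAction.orbitRel (Subgroup.zpowers σ) X)))
    (t := Finset.univ) (fun x _ => Finset.mem_univ _)]
  refine Finset.dvd_sum fun ω _ => ?_
  rw [Finset.filter_filter]
  rcases (Finset.univ.filter fun x : X =>
      Function.minimalPeriod σ x = p ∧ Quotient.mk'' x = ω).eq_empty_or_nonempty with he | ⟨x, hx⟩
  · rw [he]; simp
  · simp only [Finset.mem_filter, Finset.mem_univ, true_and] at hx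
    obtain ⟨hp, hq⟩ := hx
    have hmem : ∀ y : X, (Function.minimalPeriod σ y = p ∧ Quotient.mk'' y = ω)
        ↔ y ∈ MulAction.orbit (Subgroup.zpowers σ) x := by
      intro y
      constructor
      · rintro ⟨-, hy⟩
        rw [← hq, Quotient.eq''] at hy
        exact MulAction.orbitRel_apply.mp hy
      · intro hy
        have horb : MulAction.orbit (Subgroup.zpowers σ) y
            = MulAction.orbit (Subgroup.zpowers σ) x := MulAction.orbit_eq_iff.mpr hy
        constructor
        · rw [minper_eq_card_orbit, horb, ← minper_eq_card_orbit, hp]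
        · rw [← hq, Quotient.eq'']
          exact MulAction.orbitRel_apply.mpr hy
    have : (Finset.univ.filter fun y : X =>
        Function.minimalPeriod σ y = p ∧ Quotient.mk'' y = ω)
        = Finset.univ.filter (fun y => y ∈ MulAction.orbit (Subgroup.zpowers σ) x) := by
      apply Finset.filter_congr
      intro y _
      simp [hmem y]
    rw [this, ← Fintype.card_subtype]
    have : Fintype.card {y : X // y ∈ MulAction.orbit (Subgroup.zpowers σ) x}
        = Nat.card (MulAction.orbit (Subgroup.zpowers σ) x) := by
      rw [Nat.card_eq_fintype_card]
    rw [this, ← minper_eq_card_orbit, hp]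

/-- count of fixed points of `σ ^ k` via minimal periods. -/
lemma card_fixed_eq_sum {X : Type*} [Fintype X] (σ : Equiv.Perm X) (k : ℕ) :
    Nat.card {x : X // (σ ^ k) x = x}
      = ∑ x : X, if Function.minimalPeriod σ x ∣ k then 1 else 0 := by
  classical
  rw [Nat.card_eq_fintype_card, Fintype.card_subtype, Finset.card_filter]
  refine Finset.sum_congr rfl fun x _ => ?_
  have : (σ ^ k) x = x ↔ Function.minimalPeriod σ x ∣ k := by
    rw [← Function.isPeriodicPt_iff_minimalPeriod_dvd]
    unfold Function.IsPeriodicPt Function.IsFixedPt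
    rw [Equiv.Perm.iterate_eq_pow]
  simp [this]

lemma hasSum_indicator_log {z : ℂ} (hz : ‖z‖ < 1) {p : ℕ} (hp : 0 < p) :
    HasSum (fun k : ℕ => (if p ∣ (k + 1) then (1 : ℂ) else 0) * z ^ (k + 1) / (k + 1))
      (-Complex.log (1 - z ^ p) / p) := by
  have hw : ‖z ^ p‖ < 1 := by
    rw [norm_pow]
    exact pow_lt_one₀ (norm_nonneg z) hz hp.ne'
  have H := Complex.hasSum_taylorSeries_neg_log hw
  have H1 : HasSum (fun m : ℕ => (z ^ p) ^ (m + 1) / (m + 1)) (-Complex.log (1 - z ^ p)) := by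
    have := (hasSum_nat_add_iff' (f := fun m : ℕ => (z ^ p) ^ m / m) 1).mpr H
    simpa using this
  have H2 := H1.div_const (p : ℂ)
  set f := fun k : ℕ => (if p ∣ (k + 1) then (1 : ℂ) else 0) * z ^ (k + 1) / (k + 1) with hf
  have hkey : ∀ m : ℕ, p * m + (p - 1) + 1 = p * (m + 1) := by
    intro m
    rw [add_assoc, Nat.sub_add_cancel hp, ← Nat.mul_succ]
  have hinj : Function.Injective (fun m : ℕ => p * m + (p - 1)) := by
    intro a b h
    simp only [] at h
    exact Nat.eq_of_mul_eq_mul_left hp (by omega)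
  have hrange : ∀ k ∉ Set.range (fun m : ℕ => p * m + (p - 1)), f k = 0 := by
    intro k hk
    have : ¬ p ∣ (k + 1) := by
      intro ⟨t, ht⟩
      rcases t with _ | s
      · omega
      · refine hk ⟨s, ?_⟩
        show p * s + (p - 1) = k
        have h2 := hkey s
        omega
    simp [hf, this]
  refine (hinj.hasSum_iff hrange).mp ?_
  convert H2 using 1
  case e'_3 => rfl
  funext m
  simp only [hf, Function.comp]
  rw [hkey m]
  have hdvd : p ∣ p * (m + 1) := dvd_mul_right _ _
  rw [if_pos hdvd, one_mul, pow_mul]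
  have h3 : ((p * m + (p - 1) : ℕ) : ℂ) + 1 = (p : ℂ) * ((m : ℂ) + 1) := by
    rw [show ((p * m + (p - 1) : ℕ) : ℂ) + 1 = ((p * m + (p - 1) + 1 : ℕ) : ℂ) by
      push_cast; ring, hkey m]
    push_cast; ring
  rw [h3, div_div]
  ring

/-- `solCount A a` : the number of solutions `x` over `ℤ/2ℤ` of the linear system
`Ā x = ā`, where `Ā`, `ā` are the mod 2 reductions of `A` and `a`. -/
noncomputable def solCount {n : ℕ} (A : Matrix (Fin n) (Fin n) ℤ) (a : Fin n → ℤ) : ℕ :=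
  Nat.card {x : Fin n → ZMod 2 //
    (A.map (Int.cast : ℤ → ZMod 2)).mulVec x = fun i => ((a i : ZMod 2))}

/-- for `D ∈ GLₙ(ℤ)` and `d ∈ ℤⁿ`, there are `c₁, …, c_l ∈ ℕ` such that for
`|z| < 1` the series `∑_{k≥1} O(Iₙ - Dᵏ, [∑_{i<k} Dⁱ]d) zᵏ/k` converges and the exponential
of its sum equals `∏ᵢ (1 - zⁱ)^{-cᵢ}`. -/
theorem stmt15 (n : ℕ) (D : Matrix (Fin n) (Fin n) ℤ) (hD : IsUnit D) (d : Fin n → ℤ) :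
    ∃ (l : ℕ) (c : Fin l → ℕ),
      ∀ z : ℂ, ‖z‖ < 1 →
        ∃ s : ℂ,
          HasSum (fun k : ℕ =>
            (solCount (1 - D ^ (k + 1)) ((∑ i ∈ Finset.range (k + 1), D ^ i).mulVec d) : ℂ)
              * z ^ (k + 1) / (k + 1)) s ∧
          Complex.exp s = ∏ i : Fin l, ((1 - z ^ ((i : ℕ) + 1)) ^ (c i))⁻¹ := by

  classical
  set X := Fin n → ZMod 2 with hX
  let φ : Matrix (Fin n) (Fin n) ℤ →+* Matrix (Fin n) (Fin n) (ZMod 2) :=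
    (Int.castRingHom (ZMod 2)).mapMatrix
  set M : Matrix (Fin n) (Fin n) (ZMod 2) := φ D with hMdef
  have hM : IsUnit M := hD.map φ
  set b : X := fun i => ((d i : ZMod 2)) with hbdef
  have hφ : ∀ A : Matrix (Fin n) (Fin n) ℤ, A.map (Int.cast : ℤ → ZMod 2) = φ A :=
    fun A => rfl
  have hmv : ∀ (A : Matrix (Fin n) (Fin n) ℤ) (v : Fin n → ℤ),
      (fun i => ((A.mulVec v i : ℤ) : ZMod 2)) = (φ A).mulVec (fun i => ((v i : ZMod 2))) := by
    intro A v; funext i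
    simp only [Matrix.mulVec, dotProduct, RingHom.mapMatrix_apply, Matrix.map_apply,
      Int.coe_castRingHom]
    push_cast
    rfl
  have hinj : Function.Injective (fun x : X => M.mulVec x + b) := by
    intro x y h
    exact Matrix.mulVec_injective_iff_isUnit.mpr hM (add_right_cancel h)
  let σ : Equiv.Perm X := Equiv.ofBijective _ (Finite.injective_iff_bijective.mp hinj)
  have hσ : ∀ x : X, σ x = M.mulVec x + b := fun x => rfl
  have hiter : ∀ (k : ℕ) (x : X),
      (σ ^ k) x = (M ^ k).mulVec x + (∑ i ∈ Finset.range k, M ^ i).mulVec b := by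
    intro k
    induction k with
    | zero => intro x; simp [Matrix.one_mulVec]
    | succ k ih =>
      intro x
      rw [pow_succ, Equiv.Perm.mul_apply, ih (σ x), hσ x, Matrix.mulVec_add,
        Matrix.mulVec_mulVec, ← pow_succ, Finset.sum_range_succ, Matrix.add_mulVec]
      abel
  have hsol : ∀ k : ℕ,
      solCount (1 - D ^ (k + 1)) ((∑ i ∈ Finset.range (k + 1), D ^ i).mulVec d)
        = Nat.card {x : X // (σ ^ (k + 1)) x = x} := by
    intro k
    unfold solCount
    apply Nat.card_congr
    apply Equiv.subtypeEquivRight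
    intro x
    rw [hφ, hmv, map_sub, _root_.map_one, map_pow, map_sum]
    have hS : (∑ i ∈ Finset.range (k + 1), φ (D ^ i)) = ∑ i ∈ Finset.range (k + 1), M ^ i :=
      Finset.sum_congr rfl fun i _ => map_pow φ D i
    rw [hS, hiter, Matrix.sub_mulVec, Matrix.one_mulVec]
    constructor
    · intro h
      exact (sub_eq_iff_eq_add'.mp h).symm
    · intro h
      exact sub_eq_iff_eq_add'.mpr h.symm
  have hIs : ∀ x : X, Function.IsPeriodicPt σ (orderOf σ) x := by
    intro x
    show σ^[orderOf σ] x = x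
    rw [Equiv.Perm.iterate_eq_pow, pow_orderOf_eq_one]
    rfl
  have hl : 0 < orderOf σ := orderOf_pos σ
  have hper_pos : ∀ x : X, 0 < Function.minimalPeriod σ x :=
    fun x => (hIs x).minimalPeriod_pos hl
  have hper_dvd : ∀ x : X, Function.minimalPeriod σ x ∣ orderOf σ :=
    fun x => (hIs x).minimalPeriod_dvd
  set l := orderOf σ with hldef
  set N : ℕ → ℕ := fun p => Nat.card {x : X // Function.minimalPeriod σ x = p} with hNdef
  refine ⟨l, fun i => N ((i : ℕ) + 1) / ((i : ℕ) + 1), ?_⟩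
  intro z hz
  have hpt : ∀ x : X,
      HasSum (fun k : ℕ =>
          (if Function.minimalPeriod σ x ∣ (k + 1) then (1 : ℂ) else 0) * z ^ (k + 1) / (k + 1))
        (-Complex.log (1 - z ^ (Function.minimalPeriod σ x)) / (Function.minimalPeriod σ x)) :=
    fun x => hasSum_indicator_log hz (hper_pos x)
  have Htot := hasSum_sum (fun (x : X) (_ : x ∈ Finset.univ) => hpt x)
  refine ⟨∑ x : X, -Complex.log (1 - z ^ (Function.minimalPeriod σ x))
      / (Function.minimalPeriod σ x), ?_, ?_⟩
  · convert Htot using 1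
    funext k
    rw [hsol k, card_fixed_eq_sum σ (k + 1)]
    push_cast [apply_ite (Nat.cast : ℕ → ℂ)]
    rw [← Finset.sum_div, ← Finset.sum_mul]
  · -- exponential part
    have hne : ∀ m : ℕ, 0 < m → (1 - z ^ m) ≠ 0 := by
      intro m hm
      have : ‖z ^ m‖ < 1 := by
        rw [norm_pow]; exact pow_lt_one₀ (norm_nonneg z) hz hm.ne'
      intro hcon
      rw [sub_eq_zero] at hcon
      rw [← hcon] at this
      simp at this
    have hgroup : (∑ x : X,
          -Complex.log (1 - z ^ (Function.minimalPeriod σ x)) / (Function.minimalPeriod σ x))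
        = ∑ i : Fin l, (N ((i : ℕ) + 1) : ℂ)
            * (-Complex.log (1 - z ^ ((i : ℕ) + 1)) / (((i : ℕ) : ℂ) + 1)) := by
      have hlt : ∀ x : X, Function.minimalPeriod σ x - 1 < l := by
        intro x
        have h1 := hper_pos x
        have h2 := Nat.le_of_dvd hl (hper_dvd x)
        omega
      rw [← Finset.sum_fiberwise_of_maps_to
        (g := fun x : X => (⟨Function.minimalPeriod σ x - 1, hlt x⟩ : Fin l))
        (fun x _ => Finset.mem_univ _)
        (fun x => -Complex.log (1 - z ^ (Function.minimalPeriod σ x))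
          / (Function.minimalPeriod σ x))]
      refine Finset.sum_congr rfl fun i _ => ?_
      have hfib : ∀ x : X,
          ((⟨Function.minimalPeriod σ x - 1, hlt x⟩ : Fin l) = i)
            ↔ Function.minimalPeriod σ x = (i : ℕ) + 1 := by
        intro x
        rw [Fin.ext_iff]
        have := hper_pos x
        constructor <;> intro h <;> simp at h ⊢ <;> omega
      calc (∑ x ∈ Finset.univ.filter
              (fun x : X => (⟨Function.minimalPeriod σ x - 1, hlt x⟩ : Fin l) = i),
            -Complex.log (1 - z ^ (Function.minimalPeriod σ x)) / (Function.minimalPeriod σ x))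
          = ∑ x ∈ Finset.univ.filter
              (fun x : X => Function.minimalPeriod σ x = (i : ℕ) + 1),
            -Complex.log (1 - z ^ ((i : ℕ) + 1)) / (((i : ℕ) : ℂ) + 1) := by
            refine Finset.sum_congr ?_ ?_
            · apply Finset.filter_congr; intro x _; simp [hfib x]
            · intro x hx
              simp only [Finset.mem_filter] at hx
              rw [hx.2]
              push_cast
              ring_nf
        _ = (N ((i : ℕ) + 1) : ℂ) * (-Complex.log (1 - z ^ ((i : ℕ) + 1)) / (((i : ℕ) : ℂ) + 1)) := by
            rw [Finset.sum_const, hNdef]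
            simp only []
            rw [Nat.card_eq_fintype_card, Fintype.card_subtype, nsmul_eq_mul]
    rw [hgroup, Complex.exp_sum]
    refine Finset.prod_congr rfl fun i _ => ?_
    have hdvd : ((i : ℕ) + 1) ∣ N ((i : ℕ) + 1) := card_period_dvd σ _
    have hNfac : (N ((i : ℕ) + 1) : ℂ)
        = (((i : ℕ) + 1 : ℕ) : ℂ) * ((N ((i : ℕ) + 1) / ((i : ℕ) + 1) : ℕ) : ℂ) := by
      rw [← Nat.cast_mul, Nat.mul_div_cancel' hdvd]
    have hu : (1 - z ^ ((i : ℕ) + 1)) ≠ 0 := hne _ (Nat.succ_pos _)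
    rw [hNfac]
    have hkey : (((i : ℕ) + 1 : ℕ) : ℂ) * ((N ((i : ℕ) + 1) / ((i : ℕ) + 1) : ℕ) : ℂ)
          * (-Complex.log (1 - z ^ ((i : ℕ) + 1)) / (((i : ℕ) : ℂ) + 1))
        = ((N ((i : ℕ) + 1) / ((i : ℕ) + 1) : ℕ) : ℂ)
          * (-Complex.log (1 - z ^ ((i : ℕ) + 1))) := by
      have hne2 : (((i : ℕ) : ℂ) + 1) ≠ 0 := by
        exact_mod_cast (Nat.cast_add_one_ne_zero (i : ℕ) : ((i : ℕ) : ℂ) + 1 ≠ 0)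
      push_cast
      field_simp
    rw [hkey, Complex.exp_nat_mul, Complex.exp_neg, Complex.exp_log hu, inv_pow]
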